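/- Let X be an additively symmetric subset of a ring (not assumed to be an approximate subring), and suppose there exists a ring homomorphism f : ⟨X⟩ → S to a locally compact Hausdorff topological ring S such that f[X] has compact closure in S and there exist a neighborhood U of 0 in S and m ∈ ℕ with f⁻¹[U] ⊆ X_m. Then X_m is an approximate subring for some m. -/

import Mathlib

open Pointwise

/-- A subset of a (not necessarily unital or commutative) ring is additively symmetric
if it contains `0` and `-X = X`. -/
def AddSymmetric {R : Type*} [NonUnitalRing R] (X : Set R) : Prop :=
  (0 : R) ∈ X ∧ -X = X

/-- `X` is an approximate subring if it is additively symmetric and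
`X·X ∪ (X+X) ⊆ F + X` for some finite subset `F` of the subring generated by `X`. -/
def IsApproxSubring {R : Type*} [NonUnitalRing R] (X : Set R) : Prop :=
  AddSymmetric X ∧ ∃ F : Set R, F.Finite ∧ F ⊆ (NonUnitalSubring.closure X : Set R) ∧
    X * X ∪ (X + X) ⊆ F + X

/-- The sequence `X_0 := X`, `X_{n+1} := X_n·X_n + (X_n + X_n)`. -/
def XSeq {R : Type*} [NonUnitalRing R] (X : Set R) : ℕ → Set R
  | 0 => X
  | n + 1 => XSeq X n * XSeq X n + (XSeq X n + XSeq X n)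

lemma XSeq_key_neg {R : Type*} [NonUnitalRing R] (Y : Set R) (hY : -Y = Y) :
    -(Y * Y + (Y + Y)) ⊆ Y * Y + (Y + Y) := by
  intro z hz
  rw [Set.mem_neg] at hz
  obtain ⟨p, hp, q, hq, hpq⟩ := hz
  obtain ⟨a, ha, b, hb, hab⟩ := hp
  obtain ⟨c, hc, d, hd, hcd⟩ := hq
  have h1 : p + q = -z := hpq
  have h2 : a * b = p := hab
  have h3 : c + d = q := hcd
  have hz2 : z = (-a) * b + (-c + -d) := by
    have : z = -(a * b + (c + d)) := by rw [h2, h3, h1, neg_neg]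
    rw [this, neg_add, neg_mul, neg_add]
  rw [hz2]
  have hna : -a ∈ Y := by rw [← hY]; exact Set.neg_mem_neg.mpr ha
  have hnc : -c ∈ Y := by rw [← hY]; exact Set.neg_mem_neg.mpr hc
  have hnd : -d ∈ Y := by rw [← hY]; exact Set.neg_mem_neg.mpr hd
  exact Set.add_mem_add (Set.mul_mem_mul hna hb) (Set.add_mem_add hnc hnd)

lemma XSeq_addSymmetric {R : Type*} [NonUnitalRing R] (X : Set R) (h : AddSymmetric X) :
    ∀ n, AddSymmetric (XSeq X n) := by
  intro n
  induction n with
  | zero => exact h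
  | succ n ih =>
    obtain ⟨h0, hneg⟩ := ih
    constructor
    · show (0 : R) ∈ XSeq X n * XSeq X n + (XSeq X n + XSeq X n)
      have : (0 : R) = 0 * 0 + (0 + 0) := by simp
      rw [this]
      exact Set.add_mem_add (Set.mul_mem_mul h0 h0) (Set.add_mem_add h0 h0)
    · show -(XSeq X n * XSeq X n + (XSeq X n + XSeq X n)) =
        XSeq X n * XSeq X n + (XSeq X n + XSeq X n)
      apply Set.Subset.antisymm (XSeq_key_neg _ hneg)
      intro z hz
      rw [Set.mem_neg]
      exact XSeq_key_neg _ hneg (by rw [Set.mem_neg, neg_neg]; exact hz)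

lemma XSeq_zero_mem {R : Type*} [NonUnitalRing R] (X : Set R) (h : AddSymmetric X) (n : ℕ) :
    (0 : R) ∈ XSeq X n := (XSeq_addSymmetric X h n).1

lemma XSeq_subset_succ {R : Type*} [NonUnitalRing R] (X : Set R) (h : AddSymmetric X) (n : ℕ) :
    XSeq X n ⊆ XSeq X (n + 1) := by
  intro x hx
  have h0 := XSeq_zero_mem X h n
  show x ∈ XSeq X n * XSeq X n + (XSeq X n + XSeq X n)
  have : x = 0 * 0 + (x + 0) := by simp
  rw [this]
  exact Set.add_mem_add (Set.mul_mem_mul h0 h0) (Set.add_mem_add hx h0)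

lemma XSeq_base_subset {R : Type*} [NonUnitalRing R] (X : Set R) (h : AddSymmetric X) (n : ℕ) :
    X ⊆ XSeq X n := by
  induction n with
  | zero => exact subset_rfl
  | succ n ih => exact ih.trans (XSeq_subset_succ X h n)

/-- Let `X` be an additively symmetric subset of a ring generated by `X` (not assumed
to be an approximate subring), and suppose there is a ring homomorphism `f : R →ₙ+* S`
to a locally compact Hausdorff topological ring such that `f[X]` has compact closure
and `f⁻¹[U] ⊆ X_m` for some neighborhood `U` of `0` and some `m`. Then `X_n` is an
approximate subring for some `n`. -/
theorem XSeq_approx_subring_of_locally_compact_model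
    {R S : Type*} [NonUnitalRing R] [NonUnitalRing S] [TopologicalSpace S]
    [IsTopologicalRing S] [LocallyCompactSpace S] [T2Space S]
    (X : Set R) (hsym : AddSymmetric X) (hgen : NonUnitalSubring.closure X = ⊤)
    (f : R →ₙ+* S) (hcomp : IsCompact (closure (⇑f '' X)))
    (U : Set S) (hU : U ∈ nhds (0 : S)) (m : ℕ) (hm : ⇑f ⁻¹' U ⊆ XSeq X m) :
    ∃ n : ℕ, IsApproxSubring (XSeq X n) := by
  -- there is a compact set containing the image of each `X_n`
  have himg : ∀ n : ℕ, ∃ L : Set S, IsCompact L ∧ ⇑f '' XSeq X n ⊆ L := by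
    intro n
    induction n with
    | zero => exact ⟨closure (⇑f '' X), hcomp, subset_closure⟩
    | succ n ih =>
      obtain ⟨L, hL, hsub⟩ := ih
      refine ⟨L * L + (L + L), (hL.mul hL).add (hL.add hL), ?_⟩
      have : ⇑f '' XSeq X (n + 1) =
          ⇑f '' XSeq X n * (⇑f '' XSeq X n) + (⇑f '' XSeq X n + ⇑f '' XSeq X n) := by
        show ⇑f '' (XSeq X n * XSeq X n + (XSeq X n + XSeq X n)) = _
        rw [Set.image_add, Set.image_mul, Set.image_add]
      rw [this]
      exact Set.add_subset_add (Set.mul_subset_mul hsub hsub) (Set.add_subset_add hsub hsub)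
  obtain ⟨L, hLcomp, hLsub⟩ := himg (m + 1)
  -- a small symmetric neighborhood `W` of `0`
  obtain ⟨V, hV, hVU⟩ := exists_nhds_zero_half hU
  set W : Set S := V ∩ (-V) with hWdef
  have hW : W ∈ nhds (0 : S) := Filter.inter_mem hV (neg_mem_nhds_zero S hV)
  -- cover `L` by finitely many translates of `W`
  have hcover : ∀ s ∈ L, {y : S | y - s ∈ W} ∈ nhds s := by
    intro s _
    have hcont : ContinuousAt (fun y : S => y - s) s :=
      (continuous_id.sub continuous_const).continuousAt
    exact hcont.preimage_mem_nhds (by simpa using hW)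
  obtain ⟨t, ht⟩ := hLcomp.elim_nhds_subcover (fun s => {y : S | y - s ∈ W}) hcover
  -- choose preimage witnesses
  classical
  let g : S → R := fun s =>
    if h : ∃ x ∈ XSeq X (m + 1), f x - s ∈ W then h.choose else 0
  have hclos : NonUnitalSubring.closure (XSeq X m) = ⊤ :=
    top_unique (hgen ▸ NonUnitalSubring.closure_mono (XSeq_base_subset X hsym m))
  refine ⟨m, XSeq_addSymmetric X hsym m, g '' ↑t, (t.finite_toSet.image g), ?_, ?_⟩
  · rw [hclos]; intro x _; exact trivial
  · -- the key inclusion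
    have hkey : XSeq X (m + 1) ⊆ (g '' ↑t) + XSeq X m := by
      intro x hx
      have hfx : f x ∈ L := hLsub (Set.mem_image_of_mem _ hx)
      obtain ⟨s, hst, hxs⟩ := Set.mem_iUnion₂.mp (ht.2 hfx)
      have hxs' : f x - s ∈ W := hxs
      have hex : ∃ x' ∈ XSeq X (m + 1), f x' - s ∈ W := ⟨x, hx, hxs'⟩
      obtain ⟨hx', hfx'⟩ := hex.choose_spec
      have hgs : g s = hex.choose := dif_pos hex
      -- `f (x - choose) ∈ U`
      have hdiff : f (x - hex.choose) ∈ U := by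
        have heq : f (x - hex.choose) = (f x - s) + -(f hex.choose - s) := by
          rw [map_sub]; abel
        rw [heq]
        have h1 : f x - s ∈ V := hxs'.1
        have h2 : -(f hex.choose - s) ∈ V := Set.mem_neg.mp hfx'.2
        exact hVU _ h1 _ h2
      have hmem : x - hex.choose ∈ XSeq X m := hm hdiff
      have hx2 : x = g s + (x - hex.choose) := by rw [hgs]; abel
      rw [hx2]
      exact Set.add_mem_add (Set.mem_image_of_mem g hst) hmem
    intro x hx
    apply hkey
    have h0 := XSeq_zero_mem X hsym m
    rcases hx with hx | hx
    · obtain ⟨a, ha, b, hb, hab⟩ := hx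
      have hab' : a * b = x := hab
      show x ∈ XSeq X m * XSeq X m + (XSeq X m + XSeq X m)
      have : x = a * b + (0 + 0) := by rw [hab']; simp
      rw [this]
      exact Set.add_mem_add (Set.mul_mem_mul ha hb) (Set.add_mem_add h0 h0)
    · obtain ⟨a, ha, b, hb, hab⟩ := hx
      have hab' : a + b = x := hab
      show x ∈ XSeq X m * XSeq X m + (XSeq X m + XSeq X m)
      have : x = 0 * 0 + (a + b) := by rw [hab']; simp
      rw [this]
      exact Set.add_mem_add (Set.mul_mem_mul h0 h0) (Set.add_mem_add ha hb)
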